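/- Let R : X → PMF Y be an ε-DP local randomizer on finite types. In the shuffle re-identification game (inputs x₁,…,x_n, outputs y_i ~ R(x_i) independently, uniformly random permutation σ, adversary sees the shuffled output vector and must output σ⁻¹(1)), the success probability of every adversary is at most e^ε / n, for every choice of inputs x₁,…,x_n. -/

import Mathlib

open scoped Classical BigOperators


lemma swap_core {Y : Type*} [Fintype Y] {n : ℕ} [NeZero n]
    (A : (Fin n → Y) → Fin n) (h : Fin n → Y → ℝ)
    (c : Fin n) (hc : h c = h 0) :
    ∑ σ : Equiv.Perm (Fin n), ∑ y : Fin n → Y,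
      (∏ i, h i (y i)) * (if A (fun i => y (σ i)) = σ.symm 0 then 1 else 0)
    = ∑ σ : Equiv.Perm (Fin n), ∑ y : Fin n → Y,
      (∏ i, h i (y i)) * (if A (fun i => y (σ i)) = σ.symm c then 1 else 0) := by
  set π := Equiv.swap (0 : Fin n) c with hπ
  have hπinv : ∀ i, π (π i) = i := fun i => Equiv.swap_apply_self _ _ _
  have hπh : ∀ i, h (π i) = h i := by
    intro i
    rcases eq_or_ne i 0 with rfl | hi0
    · rw [hπ, Equiv.swap_apply_left, hc]
    rcases eq_or_ne i c with rfl | hic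
    · rw [hπ, Equiv.swap_apply_right, hc]
    · rw [hπ, Equiv.swap_apply_of_ne_of_ne hi0 hic]
  refine (Fintype.sum_equiv (Equiv.mulLeft π) _ _ fun σ => ?_).symm
  have hsymm : ((Equiv.mulLeft π σ)).symm 0 = σ.symm c := by
    have h0 : π.symm 0 = c := by rw [Equiv.symm_swap, Equiv.swap_apply_left]
    simp [Equiv.coe_mulLeft, Equiv.Perm.mul_def, Equiv.symm_trans_apply, h0]
  refine Fintype.sum_equiv
    ⟨fun y => y ∘ π, fun y => y ∘ π,
      fun y => by funext i; simp [Function.comp, hπinv],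
      fun y => by funext i; simp [Function.comp, hπinv]⟩ _ _ fun y => ?_
  simp only [Equiv.coe_fn_mk, Function.comp, hsymm, Equiv.coe_mulLeft,
    Equiv.Perm.mul_apply, hπinv]
  congr 1
  calc ∏ i, h i (y i) = ∏ i, h (π i) (y (π i)) := by
        refine (Equiv.prod_comp π (fun j => h j (y j))).symm
    _ = ∏ i, h i (y (π i)) := by
        exact Finset.prod_congr rfl fun i _ => by rw [hπh]

lemma core_bound {Y : Type*} [Fintype Y] {n : ℕ} [NeZero n]
    (A : (Fin n → Y) → Fin n) (h : Fin n → Y → ℝ)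
    (hh : ∀ i y, 0 ≤ h i y) (C : Finset (Fin n)) (h0C : (0 : Fin n) ∈ C)
    (hsym : ∀ c ∈ C, h c = h 0) :
    (C.card : ℝ) * (∑ σ : Equiv.Perm (Fin n), ∑ y : Fin n → Y,
      (∏ i, h i (y i)) * (if A (fun i => y (σ i)) = σ.symm 0 then 1 else 0))
    ≤ (n.factorial : ℝ) * ∏ i, ∑ v, h i v := by
  have key : (C.card : ℝ) * (∑ σ : Equiv.Perm (Fin n), ∑ y : Fin n → Y,
      (∏ i, h i (y i)) * (if A (fun i => y (σ i)) = σ.symm 0 then 1 else 0))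
      = ∑ c ∈ C, ∑ σ : Equiv.Perm (Fin n), ∑ y : Fin n → Y,
      (∏ i, h i (y i)) * (if A (fun i => y (σ i)) = σ.symm c then 1 else 0) := by
    rw [Finset.sum_congr rfl fun c hc => (swap_core A h c (hsym c hc)).symm]
    rw [Finset.sum_const, nsmul_eq_mul]
  rw [key]
  rw [Finset.sum_comm]
  have swap2 : ∀ σ : Equiv.Perm (Fin n), ∑ c ∈ C, ∑ y : Fin n → Y,
      (∏ i, h i (y i)) * (if A (fun i => y (σ i)) = σ.symm c then 1 else 0)
      = ∑ y : Fin n → Y, (∏ i, h i (y i)) *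
        (if σ (A (fun i => y (σ i))) ∈ C then 1 else 0) := by
    intro σ
    rw [Finset.sum_comm]
    refine Finset.sum_congr rfl fun y _ => ?_
    rw [← Finset.mul_sum]
    congr 1
    rw [Finset.sum_congr rfl fun c _ => if_congr
      (Equiv.eq_symm_apply (e := σ) (y := A fun i => y (σ i)) (x := c)) rfl rfl]
    exact Finset.sum_ite_eq C (σ (A fun i => y (σ i))) (fun _ => (1:ℝ))
  rw [Finset.sum_congr rfl fun σ _ => swap2 σ]
  calc ∑ σ : Equiv.Perm (Fin n), ∑ y : Fin n → Y, (∏ i, h i (y i)) *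
        (if σ (A (fun i => y (σ i))) ∈ C then 1 else 0)
      ≤ ∑ σ : Equiv.Perm (Fin n), ∑ y : Fin n → Y, (∏ i, h i (y i)) := by
        refine Finset.sum_le_sum fun σ _ => Finset.sum_le_sum fun y _ => ?_
        have h1 : (0:ℝ) ≤ ∏ i, h i (y i) := Finset.prod_nonneg fun i _ => hh i (y i)
        have h2 : (if σ (A (fun i => y (σ i))) ∈ C then (1:ℝ) else 0) ≤ 1 := by
          split <;> norm_num
        calc (∏ i, h i (y i)) * (if σ (A (fun i => y (σ i))) ∈ C then (1:ℝ) else 0)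
            ≤ (∏ i, h i (y i)) * 1 := mul_le_mul_of_nonneg_left h2 h1
          _ = ∏ i, h i (y i) := mul_one _
    _ = (n.factorial : ℝ) * ∏ i, ∑ v, h i v := by
        rw [Finset.sum_congr rfl fun (σ : Equiv.Perm (Fin n)) _ =>
          (Fintype.prod_sum (fun i (v : Y) => h i v)).symm]
        rw [Finset.sum_const, nsmul_eq_mul, Finset.card_univ, Fintype.card_perm,
          Fintype.card_fin]

/-- Success probability of adversary `A` in the shuffle re-identification game:
each user `i` samples `y i` from distribution `Pvec i`, a uniformly random
permutation `σ` is applied, the adversary sees the shuffled vector and wins if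
it outputs `σ⁻¹ 0` (the shuffled position of user 0, the target). -/
noncomputable def shuffleSuccess {Y : Type*} [Fintype Y] (n : ℕ) [NeZero n]
    (Pvec : Fin n → Y → ℝ) (A : (Fin n → Y) → Fin n) : ℝ :=
  (Nat.factorial n : ℝ)⁻¹ *
    ∑ σ : Equiv.Perm (Fin n), ∑ y : Fin n → Y,
      (∏ i, Pvec i (y i)) * (if A (fun i => y (σ i)) = σ.symm 0 then 1 else 0)

/-- If the local randomizer `R` is `ε`-DP, every adversary in the shuffle
re-identification game succeeds with probability at most `e^ε / n`, for every
choice of inputs. -/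
theorem stmt16 {X Y : Type*} [Fintype X] [Fintype Y] (ε : ℝ)
    (R : X → Y → ℝ)
    (hR0 : ∀ x y, 0 ≤ R x y) (hR1 : ∀ x, ∑ y, R x y = 1)
    (hDP : ∀ x x' y, R x y ≤ Real.exp ε * R x' y)
    (n : ℕ) [NeZero n] (x : Fin n → X) (A : (Fin n → Y) → Fin n) :
    shuffleSuccess n (fun i => R (x i)) A ≤ Real.exp ε / n := by
  classical
  have hn : 0 < n := Nat.pos_of_ne_zero (NeZero.ne n)
  set t := Real.exp ε with ht
  set δ := Real.exp (-ε) with hδdef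
  have hδpos : 0 < δ := Real.exp_pos _
  have hδt : δ * t = 1 := by rw [ht, hδdef, ← Real.exp_add]; simp
  have ht1 : (1:ℝ) ≤ t := by
    calc (1:ℝ) = ∑ y, R (x 0) y := (hR1 _).symm
    _ ≤ ∑ y, t * R (x 0) y := Finset.sum_le_sum fun y _ => hDP _ _ y
    _ = t * 1 := by rw [← Finset.mul_sum, hR1]
    _ = t := mul_one t
  have hδ1 : δ ≤ 1 := by nlinarith
  have hν : ∀ (i : Fin n) (v : Y), 0 ≤ R (x i) v - δ * R (x 0) v := by
    intro i v
    have h := hDP (x 0) (x i) v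
    have h2 := mul_le_mul_of_nonneg_left h hδpos.le
    rw [← mul_assoc, hδt, one_mul] at h2
    linarith
  have hνsum : ∀ i : Fin n, ∑ v, (R (x i) v - δ * R (x 0) v) = 1 - δ := by
    intro i
    rw [Finset.sum_sub_distrib, ← Finset.mul_sum, hR1, hR1, mul_one]
  set E : Finset (Fin n) := Finset.univ.erase 0 with hE
  have hEcard : E.card = n - 1 := by
    rw [hE, Finset.card_erase_of_mem (Finset.mem_univ _), Finset.card_univ, Fintype.card_fin]
  set hS : Finset (Fin n) → Fin n → Y → ℝ :=
    fun S i v => if i ∈ insert 0 S then R (x 0) v else R (x i) v - δ * R (x 0) v with hhS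
  -- complement identity
  have hcompl : ∀ S : Finset (Fin n), S ⊆ E → Finset.univ \ insert 0 S = E \ S := by
    intro S hSE
    ext i
    simp only [Finset.mem_sdiff, Finset.mem_univ, true_and, Finset.mem_insert, hE,
      Finset.mem_erase, not_or]
    tauto
  have hsplit : ∀ (S : Finset (Fin n)), S ⊆ E → ∀ y : Fin n → Y,
      (∏ i, hS S i (y i)) = (∏ i ∈ insert 0 S, R (x 0) (y i)) *
        ∏ i ∈ E \ S, (R (x i) (y i) - δ * R (x 0) (y i)) := by
    intro S hSE y
    rw [hhS]
    rw [Finset.prod_ite, Finset.filter_mem_eq_inter, Finset.univ_inter,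
      ← Finset.sdiff_eq_filter, hcompl S hSE]
  have expand : ∀ y : Fin n → Y,
      (∏ i, R (x i) (y i)) = ∑ S ∈ E.powerset, δ ^ S.card * ∏ i, hS S i (y i) := by
    intro y
    have h1 : (∏ i, R (x i) (y i)) = R (x 0) (y 0) * ∏ i ∈ E, R (x i) (y i) := by
      rw [hE]
      exact (Finset.mul_prod_erase Finset.univ (fun i => R (x i) (y i))
        (Finset.mem_univ (0 : Fin n))).symm
    have h2 : ∏ i ∈ E, R (x i) (y i)
        = ∑ S ∈ E.powerset, (∏ i ∈ S, δ * R (x 0) (y i)) *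
            ∏ i ∈ E \ S, (R (x i) (y i) - δ * R (x 0) (y i)) := by
      rw [← Finset.prod_add]
      exact Finset.prod_congr rfl fun i _ => by ring
    rw [h1, h2, Finset.mul_sum]
    refine Finset.sum_congr rfl fun S hS' => ?_
    have hSE : S ⊆ E := Finset.mem_powerset.1 hS'
    have h0S : (0 : Fin n) ∉ S := fun hmem => (Finset.mem_erase.1 (hSE hmem)).1 rfl
    rw [hsplit S hSE y, Finset.prod_insert h0S]
    rw [show ∏ i ∈ S, (δ * R (x 0) (y i)) = δ ^ S.card * ∏ i ∈ S, R (x 0) (y i) from by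
      rw [Finset.prod_mul_distrib, Finset.prod_const]]
    ring
  have hfact : (n.factorial : ℝ) ≠ 0 := Nat.cast_ne_zero.2 (Nat.factorial_ne_zero n)
  have step1 : ∑ σ : Equiv.Perm (Fin n), ∑ y : Fin n → Y,
      (∏ i, R (x i) (y i)) * (if A (fun i => y (σ i)) = σ.symm 0 then 1 else 0)
      = ∑ S ∈ E.powerset, δ ^ S.card * ∑ σ : Equiv.Perm (Fin n), ∑ y : Fin n → Y,
        (∏ i, hS S i (y i)) * (if A (fun i => y (σ i)) = σ.symm 0 then 1 else 0) := by
    have inner : ∀ σ : Equiv.Perm (Fin n), ∀ y : Fin n → Y,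
        (∏ i, R (x i) (y i)) * (if A (fun i => y (σ i)) = σ.symm 0 then 1 else 0)
        = ∑ S ∈ E.powerset, δ ^ S.card *
          ((∏ i, hS S i (y i)) * (if A (fun i => y (σ i)) = σ.symm 0 then 1 else 0)) := by
      intro σ y
      rw [expand y, Finset.sum_mul]
      exact Finset.sum_congr rfl fun S _ => by ring
    calc ∑ σ : Equiv.Perm (Fin n), ∑ y : Fin n → Y,
        (∏ i, R (x i) (y i)) * (if A (fun i => y (σ i)) = σ.symm 0 then 1 else 0)
        = ∑ σ : Equiv.Perm (Fin n), ∑ S ∈ E.powerset, ∑ y : Fin n → Y, δ ^ S.card *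
            ((∏ i, hS S i (y i)) * (if A (fun i => y (σ i)) = σ.symm 0 then 1 else 0)) := by
          refine Finset.sum_congr rfl fun σ _ => ?_
          rw [← Finset.sum_comm]
          exact Finset.sum_congr rfl fun y _ => inner σ y
      _ = ∑ S ∈ E.powerset, ∑ σ : Equiv.Perm (Fin n), ∑ y : Fin n → Y, δ ^ S.card *
            ((∏ i, hS S i (y i)) * (if A (fun i => y (σ i)) = σ.symm 0 then 1 else 0)) :=
          Finset.sum_comm
      _ = ∑ S ∈ E.powerset, δ ^ S.card * ∑ σ : Equiv.Perm (Fin n), ∑ y : Fin n → Y,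
            (∏ i, hS S i (y i)) * (if A (fun i => y (σ i)) = σ.symm 0 then 1 else 0) := by
          refine Finset.sum_congr rfl fun S _ => ?_
          rw [Finset.mul_sum]
          exact Finset.sum_congr rfl fun σ _ => (Finset.mul_sum _ _ _).symm
  have hG : ∀ S ∈ E.powerset, (∑ σ : Equiv.Perm (Fin n), ∑ y : Fin n → Y,
      (∏ i, hS S i (y i)) * (if A (fun i => y (σ i)) = σ.symm 0 then 1 else 0))
      ≤ ((S.card : ℝ) + 1)⁻¹ * ((n.factorial : ℝ) * (1 - δ) ^ (n - 1 - S.card)) := by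
    intro S hSp
    have hSE : S ⊆ E := Finset.mem_powerset.1 hSp
    have h0S : (0 : Fin n) ∉ S := fun hmem => (Finset.mem_erase.1 (hSE hmem)).1 rfl
    have hcard : (insert 0 S).card = S.card + 1 := Finset.card_insert_of_notMem h0S
    have hb := core_bound A (hS S)
      (fun i v => by rw [hhS]; dsimp only; split; exacts [hR0 _ _, hν i v])
      (insert 0 S) (Finset.mem_insert_self _ _)
      (fun c hc => by
        funext v; rw [hhS]; dsimp only
        rw [if_pos hc, if_pos (Finset.mem_insert_self 0 S)])
    have hprod : (∏ i, ∑ v, hS S i v) = (1 - δ) ^ (n - 1 - S.card) := by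
      have hval : ∀ i : Fin n, (∑ v, hS S i v) = if i ∈ insert 0 S then 1 else (1 - δ) := by
        intro i
        by_cases hc : i ∈ insert 0 S
        · rw [if_pos hc]
          have hv : ∀ v : Y, hS S i v = R (x 0) v := fun v => by rw [hhS]; exact if_pos hc
          exact (Finset.sum_congr rfl fun v _ => hv v).trans (hR1 (x 0))
        · rw [if_neg hc]
          have hv : ∀ v : Y, hS S i v = R (x i) v - δ * R (x 0) v := fun v => by
            rw [hhS]; exact if_neg hc
          exact (Finset.sum_congr rfl fun v _ => hv v).trans (hνsum i)
      rw [Finset.prod_congr rfl fun i _ => hval i]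
      rw [Finset.prod_ite, Finset.prod_const, Finset.prod_const, one_pow, one_mul,
        show (Finset.filter (fun i => i ∉ insert 0 S) Finset.univ) = E \ S from by
          rw [← Finset.sdiff_eq_filter]; exact hcompl S hSE,
        Finset.card_sdiff_of_subset hSE, hEcard]
    rw [hprod, hcard] at hb
    have hc1 : (0:ℝ) < (S.card : ℝ) + 1 := by positivity
    rw [inv_mul_eq_div, le_div_iff₀ hc1, mul_comm]
    calc ((S.card : ℝ) + 1) * _ = ((S.card + 1 : ℕ) : ℝ) * _ := by push_cast; ring
      _ ≤ _ := hb
  set g : ℕ → ℝ := fun s => δ ^ s * (((s : ℝ) + 1)⁻¹ * (1 - δ) ^ (n - 1 - s)) with hg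
  have step2 : shuffleSuccess n (fun i => R (x i)) A ≤ ∑ S ∈ E.powerset, g S.card := by
    rw [shuffleSuccess, step1]
    have hsum_le : ∑ S ∈ E.powerset, δ ^ S.card * (∑ σ : Equiv.Perm (Fin n), ∑ y : Fin n → Y,
        (∏ i, hS S i (y i)) * (if A (fun i => y (σ i)) = σ.symm 0 then 1 else 0))
        ≤ ∑ S ∈ E.powerset, δ ^ S.card *
          (((S.card : ℝ) + 1)⁻¹ * ((n.factorial : ℝ) * (1 - δ) ^ (n - 1 - S.card))) :=
      Finset.sum_le_sum fun S hSp =>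
        mul_le_mul_of_nonneg_left (hG S hSp) (pow_nonneg hδpos.le _)
    calc (n.factorial : ℝ)⁻¹ * _ ≤ (n.factorial : ℝ)⁻¹ * ∑ S ∈ E.powerset, δ ^ S.card *
          (((S.card : ℝ) + 1)⁻¹ * ((n.factorial : ℝ) * (1 - δ) ^ (n - 1 - S.card))) :=
        mul_le_mul_of_nonneg_left hsum_le (by positivity)
      _ = ∑ S ∈ E.powerset, g S.card := by
        rw [Finset.mul_sum]
        refine Finset.sum_congr rfl fun S _ => ?_
        rw [hg]
        field_simp
  refine step2.trans ?_
  have hsplitcard : ∑ S ∈ E.powerset, g S.card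
      = ∑ j ∈ Finset.range n, ((n-1).choose j : ℝ) * g j := by
    rw [Finset.sum_powerset, hEcard, Nat.sub_add_cancel hn]
    refine Finset.sum_congr rfl fun j _ => ?_
    rw [Finset.sum_powersetCard j E (fun s => g s), hEcard, nsmul_eq_mul]
  rw [hsplitcard]
  have hδinv : δ⁻¹ = t := by rw [hδdef, ht, Real.exp_neg, inv_inv]
  have idj : ∀ j : ℕ, ((n-1).choose j : ℝ) * g j
      = (n:ℝ)⁻¹ * δ⁻¹ * (δ ^ (j+1) * (1 - δ) ^ (n - (j+1)) * (n.choose (j+1) : ℝ)) := by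
    intro j
    have hnat : (n:ℝ) * ((n-1).choose j : ℝ) = ((n.choose (j+1) : ℝ)) * ((j:ℝ)+1) := by
      have h := Nat.add_one_mul_choose_eq (n-1) j
      have hsucc : n - 1 + 1 = n := by omega
      rw [hsucc] at h
      exact_mod_cast h
    have hexp : n - 1 - j = n - (j+1) := by omega
    rw [hg]
    dsimp only
    rw [hexp, pow_succ]
    have hn0 : (n:ℝ) ≠ 0 := Nat.cast_ne_zero.2 hn.ne'
    have hj0 : ((j:ℝ) + 1) ≠ 0 := by positivity
    have hδ0 : δ ≠ 0 := hδpos.ne'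
    field_simp
    linear_combination ((1 - δ) ^ (n - (j+1))) * hnat
  rw [Finset.sum_congr rfl fun j _ => idj j, ← Finset.mul_sum]
  have hbin : ∑ m ∈ Finset.range (n+1), δ^m * (1-δ)^(n-m) * (n.choose m : ℝ) = 1 := by
    rw [← add_pow]
    simp
  have hshift : ∑ j ∈ Finset.range n, δ^(j+1) * (1-δ)^(n-(j+1)) * (n.choose (j+1) : ℝ)
      = 1 - (1-δ)^n := by
    have h' := Finset.sum_range_succ' (fun m => δ^m * (1-δ)^(n-m) * (n.choose m : ℝ)) n
    rw [hbin] at h'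
    simp only [pow_zero, Nat.sub_zero, Nat.choose_zero_right, Nat.cast_one, one_mul,
      mul_one] at h'
    linarith
  rw [hshift]
  have h1 : (1 : ℝ) - (1-δ)^n ≤ 1 := by
    have : (0:ℝ) ≤ (1-δ)^n := pow_nonneg (by linarith) n
    linarith
  calc (n:ℝ)⁻¹ * δ⁻¹ * (1 - (1-δ)^n) ≤ (n:ℝ)⁻¹ * δ⁻¹ * 1 :=
      mul_le_mul_of_nonneg_left h1 (by positivity)
    _ = t / n := by rw [mul_one, hδinv]; ring
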